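/- Let u, v, w ∈ ℝ^d with u, w nonzero, and let α = ⟨u, w⟩/(2‖u‖‖w‖). Suppose v = w + e with ‖e‖ small enough that v ≠ 0, ⟨u/‖u‖, v/‖v‖⟩ ≥ ⟨u/‖u‖, w/‖w‖⟩ − α, and that ⟨u, w⟩ > 0. Then ⟨u, v⟩ ≥ α·‖u‖·‖v‖ and, if additionally ‖v‖ ≤ α·‖u‖, then ‖u − 2v‖ ≤ ‖u‖. -/

import Mathlib

open RealInnerProductSpace

theorem stmt14 {d : ℕ} (u w v e : EuclideanSpace ℝ (Fin d))
    (hu : u ≠ 0) (hw : w ≠ 0) (hv : v ≠ 0)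
    (α : ℝ) (hαdef : α = ⟪u, w⟫ / (2 * ‖u‖ * ‖w‖))
    (huw : 0 < ⟪u, w⟫)
    (hvdef : v = w + e)
    (hangle : ⟪‖u‖⁻¹ • u, ‖v‖⁻¹ • v⟫ ≥ ⟪‖u‖⁻¹ • u, ‖w‖⁻¹ • w⟫ - α) :
    ⟪u, v⟫ ≥ α * ‖u‖ * ‖v‖ ∧
    (‖v‖ ≤ α * ‖u‖ → ‖u - (2 : ℝ) • v‖ ≤ ‖u‖) := by
  have hun : (0:ℝ) < ‖u‖ := norm_pos_iff.mpr hu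
  have hwn : (0:ℝ) < ‖w‖ := norm_pos_iff.mpr hw
  have hvn : (0:ℝ) < ‖v‖ := norm_pos_iff.mpr hv
  rw [real_inner_smul_left, real_inner_smul_left, real_inner_smul_right,
      real_inner_smul_right] at hangle
  have hαpos : 0 < α := by
    rw [hαdef]; positivity
  have hkey : ⟪u, v⟫ ≥ α * ‖u‖ * ‖v‖ := by
    have h1 : ‖u‖⁻¹ * (‖w‖⁻¹ * ⟪u, w⟫) = 2 * α := by
      rw [hαdef]; field_simp
    have h2 : ‖u‖⁻¹ * (‖v‖⁻¹ * ⟪u, v⟫) ≥ α := by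
      rw [h1] at hangle; linarith
    have := mul_le_mul_of_nonneg_left h2 (le_of_lt (mul_pos hun hvn))
    calc α * ‖u‖ * ‖v‖ = ‖u‖ * ‖v‖ * α := by ring
      _ ≤ ‖u‖ * ‖v‖ * (‖u‖⁻¹ * (‖v‖⁻¹ * ⟪u, v⟫)) := this
      _ = ⟪u, v⟫ := by field_simp
  refine ⟨hkey, fun hle => ?_⟩
  have hsq : ‖u - (2:ℝ) • v‖^2 ≤ ‖u‖^2 := by
    have hexp : ‖u - (2:ℝ) • v‖^2 = ‖u‖^2 - 4 * ⟪u, v⟫ + 4 * ‖v‖^2 := by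
      rw [norm_sub_sq_real, real_inner_smul_right, norm_smul]
      simp [abs_of_nonneg]
      ring
    rw [hexp]
    nlinarith [mul_le_mul_of_nonneg_right hle hvn.le]
  calc ‖u - (2:ℝ) • v‖ = √(‖u - (2:ℝ) • v‖^2) := by
        rw [Real.sqrt_sq (norm_nonneg _)]
    _ ≤ √(‖u‖^2) := Real.sqrt_le_sqrt hsq
    _ = ‖u‖ := Real.sqrt_sq (norm_nonneg _)
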